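/- Let A be the k-subalgebra of End_k(R) generated by { λ_r : r ∈ R } together with ∂^{β^{−1}}, ∂, and ∂^β (A equals the ring D_q of q-differential operators on k[x]). Then A is a domain: if φ, ψ ∈ A and φ∘ψ = 0, then φ = 0 or ψ = 0. -/

import Mathlib

open Polynomial

noncomputable section

namespace QDiff1

variable (k : Type*) [Field k]

/-- Left multiplication operator `λ_r`. -/
def lmul (r : k[X]) : Module.End k k[X] := LinearMap.mulLeft k r

variable {k}

/-- The automorphism `σ_a`, acting on `x^b` by `q^(a*b)`. -/
def sigma (q : k) (a : ℤ) : Module.End k k[X] :=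
  (aeval (C (q ^ a) * X) : k[X] →ₐ[k] k[X]).toLinearMap

/-- The operator `∂^{β^a}`, sending `x^b` to `(1 + q^a + ⋯ + q^{a(b-1)}) x^(b-1)`. -/
def dq (q : k) (a : ℤ) : Module.End k k[X] :=
  (Polynomial.basisMonomials k).constr k
    fun b => (∑ i ∈ Finset.range b, q ^ (a * (i : ℤ))) • X ^ (b - 1)

/-- `φ` is homogeneous of degree `a : ℤ`. -/
def IsHomog (a : ℤ) (φ : Module.End k k[X]) : Prop :=
  ∀ b : ℕ, ∃ c : k, φ (X ^ b) = c • (if 0 ≤ a + (b : ℤ) then X ^ (a + (b : ℤ)).toNat else 0)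

/-- `M` is closed under `φ ↦ λ_r ∘ φ ∘ λ_s`. -/
def Closed (M : Submodule k (Module.End k k[X])) : Prop :=
  ∀ r s : k[X], ∀ φ ∈ M, lmul k r * φ * lmul k s ∈ M

/-- The filtration `D_q^n` of `q`-differential operators on `k[x]`. -/
def Dq (q : k) : ℕ → Submodule k (Module.End k k[X])
  | 0 => sInf {M | Closed M ∧
      {φ : Module.End k k[X] | ∃ a : ℤ, IsHomog a φ ∧ ∀ b : ℕ,
        φ * lmul k (X ^ b) = q ^ (a * (b : ℤ)) • (lmul k (X ^ b) * φ)} ⊆ ↑M}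
  | n + 1 => sInf {M | Closed M ∧ Dq q n ≤ M ∧
      {φ : Module.End k k[X] | ∃ a : ℤ, IsHomog a φ ∧ ∀ b : ℕ,
        φ * lmul k (X ^ b) - q ^ (a * (b : ℤ)) • (lmul k (X ^ b) * φ) ∈ Dq q n} ⊆ ↑M}



set_option linter.unusedSectionVars false
set_option maxHeartbeats 1000000

section DomainProof

variable {k : Type*} [Field k] [CharZero k]

section Aux


/-- The commutative domain of "symbols": Laurent polynomials over `k[t]`. -/
abbrev FF (k : Type*) [Field k] := LaurentPolynomial (Polynomial k)

/-- evaluation `j ↦ q^(j*b)` as a monoid hom. -/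
def evG (q : k) (hq0 : q ≠ 0) (b : ℕ) : Multiplicative ℤ →* k where
  toFun j := q ^ (Multiplicative.toAdd j * (b : ℤ))
  map_one' := by simp
  map_mul' x y := by
    simp only [toAdd_mul, add_mul]
    exact zpow_add₀ hq0 _ _

/-- Evaluation of a symbol at `b`: `single j p ↦ p(b) * q^(j*b)`. -/
def evAt (q : k) (hq0 : q ≠ 0) (b : ℕ) : FF k →+* k :=
  AddMonoidAlgebra.liftNCRingHom (Polynomial.evalRingHom ((b : ℕ) : k)) (evG q hq0 b)
    fun _ _ => Commute.all _ _

theorem evAt_single (q : k) (hq0 : q ≠ 0) (b : ℕ) (j : ℤ) (p : Polynomial k) :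
    evAt q hq0 b (AddMonoidAlgebra.single j p) = p.eval ((b : ℕ) : k) * q ^ (j * (b : ℤ)) := by
  have h := AddMonoidAlgebra.liftNC_single ((Polynomial.evalRingHom ((b : ℕ) : k)) : Polynomial k →+ k)
    (⇑(evG q hq0 b)) j p
  simpa [evAt, AddMonoidAlgebra.liftNCRingHom, evG] using h

/-- The shift homomorphism `tauB` on the base. -/
def tauB (c : ℤ) : Polynomial k →+* FF k :=
  LaurentPolynomial.C.comp (Polynomial.eval₂RingHom Polynomial.C (Polynomial.X + Polynomial.C ((c : ℤ) : k)))

def tauG (q : k) (hq0 : q ≠ 0) (c : ℤ) : Multiplicative ℤ →* FF k where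
  toFun j := LaurentPolynomial.C (Polynomial.C (q ^ (c * Multiplicative.toAdd j))) *
      LaurentPolynomial.T (Multiplicative.toAdd j)
  map_one' := by simp
  map_mul' x y := by
    simp only [toAdd_mul, mul_add, zpow_add₀ hq0, map_mul, LaurentPolynomial.T_add]
    ring

/-- The shift `tau c : single j p ↦ single j (q^(c*j) * p(X + c))`. -/
def tau (q : k) (hq0 : q ≠ 0) (c : ℤ) : FF k →+* FF k :=
  AddMonoidAlgebra.liftNCRingHom (tauB c) (tauG q hq0 c) fun _ _ => Commute.all _ _

theorem tau_single (q : k) (hq0 : q ≠ 0) (c j : ℤ) (p : Polynomial k) :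
    tau q hq0 c (AddMonoidAlgebra.single j p) =
      AddMonoidAlgebra.single j (Polynomial.C (q ^ (c * j)) * p.comp (Polynomial.X + Polynomial.C ((c : ℤ) : k))) := by
  have h := AddMonoidAlgebra.liftNC_single ((tauB c : Polynomial k →+* FF k) : Polynomial k →+ FF k)
    (⇑(tauG q hq0 c)) j p
  have h2 : tau q hq0 c (AddMonoidAlgebra.single j p) =
      tauB c p * tauG q hq0 c (Multiplicative.ofAdd j) := h
  rw [h2]
  simp only [tauB, tauG, RingHom.coe_comp, Function.comp_apply, coe_eval₂RingHom, MonoidHom.coe_mk,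
    OneHom.coe_mk, toAdd_ofAdd]
  rw [LaurentPolynomial.single_eq_C_mul_T, ← mul_assoc, ← map_mul]
  rw [mul_comm (Polynomial.eval₂ Polynomial.C (Polynomial.X + Polynomial.C ((c : ℤ) : k)) p)]
  rfl

theorem evAt_tau (q : k) (hq0 : q ≠ 0) (c : ℤ) (b : ℕ) (hbc : 0 ≤ (b : ℤ) + c) (f : FF k) :
    evAt q hq0 b (tau q hq0 c f) = evAt q hq0 ((b : ℤ) + c).toNat f := by
  induction f using AddMonoidAlgebra.induction_linear with
  | zero => simp
  | add f g hf hg => rw [map_add, map_add, map_add, hf, hg]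
  | single j p =>
    rw [tau_single, evAt_single, evAt_single]
    have hm : ((((b : ℤ) + c).toNat : ℕ) : ℤ) = (b : ℤ) + c := Int.toNat_of_nonneg hbc
    have hk : ((((b : ℤ) + c).toNat : ℕ) : k) = (b : k) + (c : k) := by
      have h2 := congrArg (fun z : ℤ => (z : k)) hm
      push_cast at h2
      exact h2
    rw [hk, hm, Polynomial.eval_mul, Polynomial.eval_C, Polynomial.eval_comp, Polynomial.eval_add,
      Polynomial.eval_X, Polynomial.eval_C]
    rw [mul_add j ((b : ℤ)) c, zpow_add₀ hq0]
    push_cast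
    ring

end Aux

section Key

open scoped Classical in
/-- weighted degree: 0 for the zero polynomial, `deg+1` otherwise. -/
def wdeg (p : Polynomial k) : ℕ := if p = 0 then 0 else p.natDegree + 1

theorem wdeg_eq_zero {p : Polynomial k} (h : p = 0) : wdeg p = 0 := by simp [wdeg, h]

theorem wdeg_eq_succ {p : Polynomial k} (h : p ≠ 0) : wdeg p = p.natDegree + 1 := by
  simp [wdeg, h]

theorem key_aux (q : k) (hq0 : q ≠ 0) (hinj : ∀ j : ℤ, q ^ j = 1 → j = 0) :
    ∀ (n : ℕ) (J : Finset ℤ) (p : ℤ → Polynomial k) (N : ℕ),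
      (∑ j ∈ J, wdeg (p j)) ≤ n →
      (∀ b : ℕ, N ≤ b → ∑ j ∈ J, (p j).eval ((b : ℕ) : k) * q ^ (j * (b : ℤ)) = 0) →
      ∀ j ∈ J, p j = 0 := by
  intro n
  induction n with
  | zero =>
    intro J p N hμ h j hj
    have h0 : wdeg (p j) = 0 :=
      Nat.eq_zero_of_le_zero (le_trans
        (Finset.single_le_sum (f := fun j => wdeg (p j)) (fun _ _ => Nat.zero_le _) hj) hμ)
    by_contra hne
    simp [wdeg, hne] at h0
  | succ n ih =>
    intro J p N hμ h
    by_cases hex : ∀ j ∈ J, p j = 0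
    · exact hex
    push_neg at hex
    obtain ⟨j0, hj0J, hj0⟩ := hex
    exfalso
    set c1 : Polynomial k := Polynomial.X + Polynomial.C 1 with hc1
    have hc1deg : c1.natDegree = 1 := Polynomial.natDegree_X_add_C 1
    set p' : ℤ → Polynomial k :=
      fun j => Polynomial.C (q ^ j) * ((p j).comp c1) - Polynomial.C (q ^ j0) * p j with hp'
    -- transformed hypothesis
    have h' : ∀ b : ℕ, N ≤ b → ∑ j ∈ J, (p' j).eval ((b : ℕ) : k) * q ^ (j * (b : ℤ)) = 0 := by
      intro b hb
      have expand : ∀ j ∈ J, (p' j).eval ((b : ℕ) : k) * q ^ (j * (b : ℤ)) =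
          (p j).eval (((b + 1 : ℕ) : k)) * q ^ (j * ((b + 1 : ℕ) : ℤ))
            - q ^ j0 * ((p j).eval ((b : ℕ) : k) * q ^ (j * (b : ℤ))) := by
        intro j _
        have he : (j * ((b + 1 : ℕ) : ℤ)) = j * (b : ℤ) + j := by push_cast; ring
        rw [he, zpow_add₀ hq0]
        simp only [hp', Polynomial.eval_sub, Polynomial.eval_mul, Polynomial.eval_C, hc1,
          Polynomial.eval_comp, Polynomial.eval_add, Polynomial.eval_X, Polynomial.eval_one]
        push_cast
        ring
      rw [Finset.sum_congr rfl expand, Finset.sum_sub_distrib, h (b + 1) (by omega),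
        ← Finset.mul_sum, h b hb]
      ring
    -- termwise monotonicity of the measure
    have hterm : ∀ j ∈ J, wdeg (p' j) ≤ wdeg (p j) := by
      intro j _
      by_cases h0 : p j = 0
      · have : p' j = 0 := by simp [hp', h0]
        rw [wdeg_eq_zero this, wdeg_eq_zero h0]
      · by_cases h0' : p' j = 0
        · rw [wdeg_eq_zero h0']; exact Nat.zero_le _
        · rw [wdeg_eq_succ h0', wdeg_eq_succ h0, add_le_add_iff_right]
          refine le_trans (Polynomial.natDegree_sub_le _ _) ?_
          simp only [max_le_iff]
          constructor
          · refine le_trans (Polynomial.natDegree_C_mul_le _ _) ?_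
            rw [Polynomial.natDegree_comp, hc1deg, mul_one]
          · exact Polynomial.natDegree_C_mul_le _ _
    -- strict decrease at j0
    have hstrict : wdeg (p' j0) < wdeg (p j0) := by
      have hw : wdeg (p j0) = (p j0).natDegree + 1 := wdeg_eq_succ hj0
      by_cases h0' : p' j0 = 0
      · rw [hw, wdeg_eq_zero h0']
        omega
      · have hfac : p' j0 = Polynomial.C (q ^ j0) * ((p j0).comp c1 - p j0) := by
          rw [hp']; ring
        by_cases hconst : (p j0).natDegree = 0
        · exfalso
          apply h0'
          obtain ⟨a, ha⟩ := Polynomial.natDegree_eq_zero.mp hconst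
          rw [hfac, ← ha, Polynomial.C_comp, sub_self, mul_zero]
        · have hcompdeg : ((p j0).comp c1).natDegree = (p j0).natDegree := by
            rw [Polynomial.natDegree_comp, hc1deg, mul_one]
          have hlc : ((p j0).comp c1).leadingCoeff = (p j0).leadingCoeff := by
            rw [Polynomial.leadingCoeff_comp (by rw [hc1deg]; exact one_ne_zero)]
            rw [hc1, Polynomial.leadingCoeff_X_add_C, one_pow, mul_one]
          have hcompne : (p j0).comp c1 ≠ 0 := by
            intro hz
            apply hj0
            rw [← Polynomial.leadingCoeff_eq_zero, ← hlc, hz, Polynomial.leadingCoeff_zero]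
          have hdeg : ((p j0).comp c1).degree = (p j0).degree := by
            rw [Polynomial.degree_eq_natDegree hcompne, Polynomial.degree_eq_natDegree hj0, hcompdeg]
          have hsub := Polynomial.degree_sub_lt hdeg hcompne hlc
          -- degree (comp - p j0) < degree comp
          have hd : ((p j0).comp c1 - p j0).natDegree < (p j0).natDegree := by
            by_cases hz : (p j0).comp c1 - p j0 = 0
            · rw [hz, Polynomial.natDegree_zero]
              omega
            · exact Polynomial.natDegree_lt_natDegree hz (by rwa [hdeg] at hsub)
          have hdp' : (p' j0).natDegree < (p j0).natDegree := by
            rw [hfac]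
            exact lt_of_le_of_lt (Polynomial.natDegree_C_mul_le _ _) hd
          rw [hw, wdeg_eq_succ h0']
          omega
    have hlt : (∑ j ∈ J, wdeg (p' j)) < ∑ j ∈ J, wdeg (p j) :=
      Finset.sum_lt_sum hterm ⟨j0, hj0J, hstrict⟩
    have hall : ∀ j ∈ J, p' j = 0 := ih J p' N (by omega) h'
    -- components other than j0 vanish
    have hvanish : ∀ j ∈ J, j ≠ j0 → p j = 0 := by
      intro j hj hne
      by_contra hpj
      have hcompdeg : ((p j).comp c1).natDegree = (p j).natDegree := by
        rw [Polynomial.natDegree_comp, hc1deg, mul_one]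
      have hlc : ((p j).comp c1).leadingCoeff = (p j).leadingCoeff := by
        rw [Polynomial.leadingCoeff_comp (by rw [hc1deg]; exact one_ne_zero)]
        rw [hc1, Polynomial.leadingCoeff_X_add_C, one_pow, mul_one]
      have hcoeff := congrArg (fun r => Polynomial.coeff r (p j).natDegree) (hall j hj)
      simp only [hp', Polynomial.coeff_sub, Polynomial.coeff_C_mul, Polynomial.coeff_zero] at hcoeff
      have hcc : ((p j).comp c1).coeff (p j).natDegree = (p j).leadingCoeff := by
        rw [← hcompdeg, Polynomial.coeff_natDegree, hlc]
      rw [hcc, Polynomial.coeff_natDegree] at hcoeff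
      have hz : (q ^ j - q ^ j0) * (p j).leadingCoeff = 0 := by linear_combination hcoeff
      rcases mul_eq_zero.mp hz with h1 | h2
      · have he : q ^ j = q ^ j0 := sub_eq_zero.mp h1
        have he2 : q ^ (j - j0) = 1 := by
          rw [zpow_sub₀ hq0, he, div_self (zpow_ne_zero _ hq0)]
        exact hne (by have := hinj _ he2; omega)
      · exact hpj (Polynomial.leadingCoeff_eq_zero.mp h2)
    -- so only the j0 term remains
    have hsingle : ∀ b : ℕ, N ≤ b → (p j0).eval ((b : ℕ) : k) = 0 := by
      intro b hb
      have hs := h b hb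
      rw [Finset.sum_eq_single_of_mem j0 hj0J
        (fun j hj hne => by rw [hvanish j hj hne, Polynomial.eval_zero, zero_mul])] at hs
      exact (mul_eq_zero.mp hs).resolve_right (zpow_ne_zero _ hq0)
    apply hj0
    refine Polynomial.eq_zero_of_infinite_isRoot _ ?_
    apply Set.infinite_of_injective_forall_mem (f := fun m : ℕ => ((N + m : ℕ) : k))
    · intro a b hab
      have : (N + a : ℕ) = (N + b : ℕ) := Nat.cast_injective hab
      omega
    · intro a
      exact hsingle (N + a) (Nat.le_add_right _ _)

end Key

section Ev

open scoped Classical in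
theorem evAt_eventually (q : k) (hq0 : q ≠ 0) (hinj : ∀ j : ℤ, q ^ j = 1 → j = 0)
    (f : FF k) (N : ℕ) (h : ∀ b : ℕ, N ≤ b → evAt q hq0 b f = 0) : f = 0 := by
  have hsum : ∀ b : ℕ, evAt q hq0 b f = ∑ j ∈ f.coeff.support, (f.coeff j).eval ((b : ℕ) : k) * q ^ (j * (b : ℤ)) := by
    intro b
    conv_lhs => rw [← AddMonoidAlgebra.sum_coeff_single f]
    rw [Finsupp.sum, map_sum]
    exact Finset.sum_congr rfl fun j hj => evAt_single q hq0 b j (f.coeff j)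
  have hall := key_aux q hq0 hinj (∑ j ∈ f.coeff.support, wdeg (f.coeff j))
    f.coeff.support (fun j => f.coeff j) N le_rfl (fun b hb => by rw [← hsum b]; exact h b hb)
  refine AddMonoidAlgebra.ext (Finsupp.ext fun j => ?_)
  by_cases hj : j ∈ f.coeff.support
  · simpa using hall j hj
  · simpa using Finsupp.notMem_support_iff.mp hj

theorem tau_inj (q : k) (hq0 : q ≠ 0) (hinj : ∀ j : ℤ, q ^ j = 1 → j = 0) (c : ℤ)
    {f : FF k} (h : tau q hq0 c f = 0) : f = 0 := by
  apply evAt_eventually q hq0 hinj f c.toNat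
  intro n hn
  have hb : 0 ≤ (n : ℤ) - c := by omega
  have hb2 : ((((n : ℤ) - c).toNat : ℕ) : ℤ) = (n : ℤ) - c := Int.toNat_of_nonneg hb
  have h3 : 0 ≤ ((((n : ℤ) - c).toNat : ℕ) : ℤ) + c := by omega
  have h4 := evAt_tau q hq0 c (((n : ℤ) - c).toNat) h3 f
  rw [h, map_zero] at h4
  have h5 : (((((n : ℤ) - c).toNat : ℕ) : ℤ) + c).toNat = n := by omega
  rw [h5] at h4
  exact h4.symm
end Ev

section Rep

/-- `φ` is represented by symbol family `s` on degrees `D`. -/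
def Rep (q : k) (hq0 : q ≠ 0) (φ : Module.End k k[X]) (D : Finset ℤ) (s : ℤ → FF k) : Prop :=
  (∀ (b : ℕ) (d : ℤ), d ∈ D → (b : ℤ) + d < 0 → evAt q hq0 b (s d) = 0) ∧
  ∀ b : ℕ, φ (X ^ b) = ∑ d ∈ D, evAt q hq0 b (s d) • X ^ ((b : ℤ) + d).toNat

theorem dq_apply (q : k) (a : ℤ) (b : ℕ) :
    dq q a (X ^ b) = (∑ i ∈ Finset.range b, q ^ (a * (i : ℤ))) • X ^ (b - 1) := by
  have hX : (X : k[X]) ^ b = (Polynomial.basisMonomials k) b := by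
    rw [Polynomial.coe_basisMonomials]
    exact Polynomial.X_pow_eq_monomial b
  rw [hX, dq, Module.Basis.constr_basis]

theorem rep_algebraMap (q : k) (hq0 : q ≠ 0) (c : k) :
    Rep q hq0 (algebraMap k (Module.End k k[X]) c) {0} (fun _ => AddMonoidAlgebra.single 0 (Polynomial.C c)) := by
  constructor
  · intro b d hd hlt
    rw [Finset.mem_singleton] at hd
    subst hd
    exact absurd hlt (by omega)
  · intro b
    rw [Finset.sum_singleton, evAt_single]
    simp [Module.algebraMap_end_apply]

theorem rep_lmul (q : k) (hq0 : q ≠ 0) (r : k[X]) :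
    Rep q hq0 (lmul k r) ((Finset.range (r.natDegree + 1)).image fun i : ℕ => (i : ℤ))
      (fun d => AddMonoidAlgebra.single 0 (Polynomial.C (r.coeff d.toNat))) := by
  constructor
  · intro b d hd hlt
    simp only [Finset.mem_image, Finset.mem_range] at hd
    obtain ⟨i, _, rfl⟩ := hd
    exact absurd hlt (by omega)
  · intro b
    have hinj2 : ∀ x ∈ Finset.range (r.natDegree + 1), ∀ y ∈ Finset.range (r.natDegree + 1),
        (x : ℤ) = (y : ℤ) → x = y := fun x _ y _ h => by exact_mod_cast h
    rw [Finset.sum_image hinj2]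
    have : ∀ i ∈ Finset.range (r.natDegree + 1),
        evAt q hq0 b (AddMonoidAlgebra.single 0 (Polynomial.C (r.coeff ((i : ℤ)).toNat))) • (X : k[X]) ^ ((b : ℤ) + (i : ℤ)).toNat
          = r.coeff i • X ^ (b + i) := by
      intro i _
      rw [evAt_single]
      have h1 : ((i : ℤ)).toNat = i := Int.toNat_natCast i
      have h2 : ((b : ℤ) + (i : ℤ)).toNat = b + i := by omega
      rw [h1, h2]
      simp
    rw [Finset.sum_congr rfl this]
    show r * X ^ b = _
    conv_lhs => rw [Polynomial.as_sum_range' r (r.natDegree + 1) (Nat.lt_succ_self _)]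
    rw [Finset.sum_mul]
    refine Finset.sum_congr rfl fun i _ => ?_
    rw [Polynomial.monomial_mul_X_pow, add_comm i b, ← Polynomial.smul_X_eq_monomial]

theorem rep_dq_of (q : k) (hq0 : q ≠ 0) (a : ℤ) (g : FF k)
    (hg : ∀ b : ℕ, evAt q hq0 b g = ∑ i ∈ Finset.range b, q ^ (a * (i : ℤ))) :
    Rep q hq0 (dq q a) {(-1 : ℤ)} (fun _ => g) := by
  constructor
  · intro b d hd hlt
    rw [Finset.mem_singleton] at hd
    subst hd
    have hb : b = 0 := by omega
    subst hb
    rw [hg]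
    simp
  · intro b
    rw [dq_apply, Finset.sum_singleton, hg]
    cases b with
    | zero => simp
    | succ m =>
      have h2 : (((m + 1 : ℕ) : ℤ) + (-1)).toNat = (m + 1) - 1 := by omega
      rw [h2]

theorem rep_dq0 (q : k) (hq0 : q ≠ 0) :
    Rep q hq0 (dq q 0) {(-1 : ℤ)} (fun _ => AddMonoidAlgebra.single 0 Polynomial.X) := by
  refine rep_dq_of q hq0 0 _ fun b => ?_
  rw [evAt_single]
  simp

theorem rep_dq1 (q : k) (hq0 : q ≠ 0) (hq1 : q ≠ 1) :
    Rep q hq0 (dq q 1) {(-1 : ℤ)}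
      (fun _ => AddMonoidAlgebra.single 1 (Polynomial.C (q - 1)⁻¹) - AddMonoidAlgebra.single 0 (Polynomial.C (q - 1)⁻¹)) := by
  refine rep_dq_of q hq0 1 _ fun b => ?_
  rw [map_sub, evAt_single, evAt_single]
  have hs : ∑ i ∈ Finset.range b, q ^ ((1 : ℤ) * (i : ℤ)) = (q ^ b - 1) / (q - 1) := by
    rw [← geom_sum_eq hq1]
    exact Finset.sum_congr rfl fun i _ => by rw [one_mul, zpow_natCast]
  rw [hs]
  have hne : q - 1 ≠ 0 := sub_ne_zero.mpr hq1
  rw [one_mul, zero_mul, zpow_zero, zpow_natCast]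
  simp only [Polynomial.eval_C]
  field_simp

theorem rep_dqm1 (q : k) (hq0 : q ≠ 0) (hq1 : q ≠ 1) :
    Rep q hq0 (dq q (-1)) {(-1 : ℤ)}
      (fun _ => AddMonoidAlgebra.single (-1) (Polynomial.C (q⁻¹ - 1)⁻¹) - AddMonoidAlgebra.single 0 (Polynomial.C (q⁻¹ - 1)⁻¹)) := by
  have hqi1 : q⁻¹ ≠ 1 := by
    intro hh
    exact hq1 (by rw [← inv_inv q, hh, inv_one])
  refine rep_dq_of q hq0 (-1) _ fun b => ?_
  rw [map_sub, evAt_single, evAt_single]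
  have hs : ∑ i ∈ Finset.range b, q ^ ((-1 : ℤ) * (i : ℤ)) = ((q⁻¹) ^ b - 1) / (q⁻¹ - 1) := by
    rw [← geom_sum_eq hqi1]
    refine Finset.sum_congr rfl fun i _ => ?_
    rw [neg_one_mul, zpow_neg, zpow_natCast, inv_pow]
  rw [hs]
  have hne : q⁻¹ - 1 ≠ 0 := sub_ne_zero.mpr hqi1
  rw [neg_one_mul, zero_mul, zpow_zero, zpow_neg, zpow_natCast]
  simp only [Polynomial.eval_C]
  rw [← inv_pow]
  have generic : ∀ x : k, x - 1 ≠ 0 → (x - 1)⁻¹ * x ^ b - (x - 1)⁻¹ * 1 = (x ^ b - 1) / (x - 1) := by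
    intro x hx
    field_simp
  exact generic q⁻¹ hne

theorem rep_add (q : k) (hq0 : q ≠ 0) {φ ψ : Module.End k k[X]} {D1 D2 : Finset ℤ}
    {s1 s2 : ℤ → FF k} (h1 : Rep q hq0 φ D1 s1) (h2 : Rep q hq0 ψ D2 s2) :
    Rep q hq0 (φ + ψ) (D1 ∪ D2)
      (fun d => (if d ∈ D1 then s1 d else 0) + (if d ∈ D2 then s2 d else 0)) := by
  classical
  constructor
  · intro b d hd hlt
    rw [map_add]
    have e1 : evAt q hq0 b (if d ∈ D1 then s1 d else 0) = 0 := by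
      by_cases h : d ∈ D1
      · rw [if_pos h]; exact h1.1 b d h hlt
      · rw [if_neg h, map_zero]
    have e2 : evAt q hq0 b (if d ∈ D2 then s2 d else 0) = 0 := by
      by_cases h : d ∈ D2
      · rw [if_pos h]; exact h2.1 b d h hlt
      · rw [if_neg h, map_zero]
    rw [e1, e2, add_zero]
  · intro b
    rw [LinearMap.add_apply, h1.2 b, h2.2 b]
    have expand : ∀ d ∈ D1 ∪ D2,
        evAt q hq0 b ((if d ∈ D1 then s1 d else 0) + (if d ∈ D2 then s2 d else 0)) • (X : k[X]) ^ ((b : ℤ) + d).toNat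
        = (evAt q hq0 b (if d ∈ D1 then s1 d else 0)) • X ^ ((b : ℤ) + d).toNat
          + (evAt q hq0 b (if d ∈ D2 then s2 d else 0)) • X ^ ((b : ℤ) + d).toNat := by
      intro d _
      rw [map_add, add_smul]
    rw [Finset.sum_congr rfl expand, Finset.sum_add_distrib]
    congr 1
    · rw [← Finset.sum_subset Finset.subset_union_left
        (fun d _ hd => by rw [if_neg hd, map_zero, zero_smul])]
      exact (Finset.sum_congr rfl fun d hd => by rw [if_pos hd]).symm
    · rw [← Finset.sum_subset Finset.subset_union_right
        (fun d _ hd => by rw [if_neg hd, map_zero, zero_smul])]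
      exact (Finset.sum_congr rfl fun d hd => by rw [if_pos hd]).symm

open scoped Classical in
theorem rep_mul (q : k) (hq0 : q ≠ 0) {φ ψ : Module.End k k[X]} {D1 D2 : Finset ℤ}
    {s1 s2 : ℤ → FF k} (h1 : Rep q hq0 φ D1 s1) (h2 : Rep q hq0 ψ D2 s2) :
    Rep q hq0 (φ * ψ) ((D1 ×ˢ D2).image fun p => p.1 + p.2)
      (fun d => ∑ p ∈ (D1 ×ˢ D2).filter (fun p => p.1 + p.2 = d),
        tau q hq0 p.2 (s1 p.1) * s2 p.2) := by
  have hterm : ∀ (b : ℕ) (p : ℤ × ℤ), p.1 ∈ D1 → p.2 ∈ D2 → ((b : ℤ) + (p.1 + p.2) < 0) →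
      evAt q hq0 b (tau q hq0 p.2 (s1 p.1) * s2 p.2) = 0 := by
    intro b p hp1 hp2 hlt
    rw [map_mul]
    by_cases hb2 : (b : ℤ) + p.2 < 0
    · rw [h2.1 b p.2 hp2 hb2, mul_zero]
    · push_neg at hb2
      rw [evAt_tau q hq0 _ _ hb2, h1.1 _ p.1 hp1 (by omega), zero_mul]
  constructor
  · intro b d hd hlt
    rw [map_sum]
    refine Finset.sum_eq_zero fun p hp => ?_
    rw [Finset.mem_filter, Finset.mem_product] at hp
    exact hterm b p hp.1.1 hp.1.2 (by rw [hp.2]; exact hlt)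
  · intro b
    rw [Module.End.mul_apply, h2.2 b, map_sum]
    simp only [map_smul]
    have step1 : ∀ d2 ∈ D2, evAt q hq0 b (s2 d2) • φ (X ^ ((b : ℤ) + d2).toNat) =
        ∑ d1 ∈ D1, evAt q hq0 b (tau q hq0 d2 (s1 d1) * s2 d2) • (X : k[X]) ^ ((b : ℤ) + (d1 + d2)).toNat := by
      intro d2 hd2
      by_cases hb2 : (b : ℤ) + d2 < 0
      · rw [h2.1 b d2 hd2 hb2, zero_smul]
        symm
        refine Finset.sum_eq_zero fun d1 _ => ?_
        rw [map_mul, h2.1 b d2 hd2 hb2, mul_zero, zero_smul]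
      · push_neg at hb2
        rw [h1.2 (((b : ℤ) + d2).toNat), Finset.smul_sum]
        refine Finset.sum_congr rfl fun d1 _ => ?_
        rw [map_mul, evAt_tau q hq0 _ _ hb2, smul_smul]
        have hexp : (((((b : ℤ) + d2).toNat : ℕ) : ℤ) + d1).toNat = ((b : ℤ) + (d1 + d2)).toNat := by
          omega
        rw [hexp, mul_comm]
    rw [Finset.sum_congr rfl step1, Finset.sum_comm]
    rw [← Finset.sum_product' (s := D1) (t := D2)
      (f := fun d1 d2 => evAt q hq0 b (tau q hq0 d2 (s1 d1) * s2 d2) •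
        (X : k[X]) ^ ((b : ℤ) + (d1 + d2)).toNat)]
    rw [← Finset.sum_fiberwise_of_maps_to (g := fun p : ℤ × ℤ => p.1 + p.2)
      (fun p hp => Finset.mem_image_of_mem _ hp)]
    refine Finset.sum_congr rfl fun d hd => ?_
    rw [map_sum, Finset.sum_smul]
    refine Finset.sum_congr rfl fun p hp => ?_
    rw [(Finset.mem_filter.mp hp).2]

theorem eq_zero_of_rep (q : k) (hq0 : q ≠ 0) {φ : Module.End k k[X]} {D : Finset ℤ}
    {s : ℤ → FF k} (h : Rep q hq0 φ D s) (hs : ∀ d ∈ D, s d = 0) : φ = 0 := by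
  refine (Polynomial.basisMonomials k).ext fun b => ?_
  have hXb : (Polynomial.basisMonomials k) b = (X : k[X]) ^ b := by
    rw [Polynomial.coe_basisMonomials]
    exact (Polynomial.X_pow_eq_monomial b).symm
  rw [hXb, h.2 b, LinearMap.zero_apply]
  refine Finset.sum_eq_zero fun d hd => ?_
  rw [hs d hd, map_zero, zero_smul]

theorem rep_zero (q : k) (hq0 : q ≠ 0) (hinj : ∀ j : ℤ, q ^ j = 1 → j = 0)
    {D : Finset ℤ} {s : ℤ → FF k} (h : Rep q hq0 (0 : Module.End k k[X]) D s) :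
    ∀ d ∈ D, s d = 0 := by
  intro d0 hd0
  apply evAt_eventually q hq0 hinj _ (D.sup fun d => (-d).toNat)
  intro b hb
  have hpos : ∀ d ∈ D, 0 ≤ (b : ℤ) + d := by
    intro d hd
    have h1 : (-d).toNat ≤ b := le_trans (Finset.le_sup (f := fun d => (-d).toNat) hd) hb
    omega
  have h0 := h.2 b
  rw [LinearMap.zero_apply] at h0
  have hcoeff := congrArg (fun r : k[X] => r.coeff ((b : ℤ) + d0).toNat) h0.symm
  simp only [Polynomial.finset_sum_coeff, Polynomial.coeff_smul, Polynomial.coeff_X_pow,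
    Polynomial.coeff_zero, smul_eq_mul] at hcoeff
  rw [Finset.sum_eq_single_of_mem d0 hd0 (fun d hd hne => ?_)] at hcoeff
  · simpa using hcoeff
  · have hne2 : ((b : ℤ) + d).toNat ≠ ((b : ℤ) + d0).toNat := by
      have := hpos d hd
      have := hpos d0 hd0
      omega
    rw [if_neg (fun hh => hne2 hh.symm), mul_zero]

theorem domain_main [CharZero k] (q : k) (hq : Transcendental ℚ q)
    (φ ψ : Module.End k k[X])
    (hφ : φ ∈ Algebra.adjoin k (Set.range (lmul k) ∪ {dq q (-1), dq q 0, dq q 1}))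
    (hψ : ψ ∈ Algebra.adjoin k (Set.range (lmul k) ∪ {dq q (-1), dq q 0, dq q 1}))
    (h : φ * ψ = 0) : φ = 0 ∨ ψ = 0 := by
  classical
  have hq0 : q ≠ 0 := by
    intro h0
    exact hq (by rw [h0]; exact isAlgebraic_zero)
  have hqpow : ∀ n : ℕ, n ≠ 0 → q ^ n ≠ 1 := by
    intro n hn h1
    apply hq
    refine ⟨Polynomial.X ^ n - Polynomial.C 1, ?_, ?_⟩
    · exact Polynomial.X_pow_sub_C_ne_zero (Nat.pos_of_ne_zero hn) 1
    · simp [h1]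
  have hq1 : q ≠ 1 := by
    intro h1
    exact hqpow 1 one_ne_zero (by rw [pow_one, h1])
  have hinj : ∀ j : ℤ, q ^ j = 1 → j = 0 := by
    intro j hj
    by_contra hne
    rcases lt_or_gt_of_ne hne with hlt | hgt
    · have h2 : q ^ ((-j).toNat) = 1 := by
        rw [← zpow_natCast, Int.toNat_of_nonneg (by omega), zpow_neg, hj, inv_one]
      exact hqpow _ (by omega) h2
    · have h2 : q ^ (j.toNat) = 1 := by
        rw [← zpow_natCast, Int.toNat_of_nonneg (by omega), hj]
      exact hqpow _ (by omega) h2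
  -- every element of the adjoined algebra has a representation
  have hGood : ∀ χ ∈ Algebra.adjoin k (Set.range (lmul k) ∪ {dq q (-1), dq q 0, dq q 1}),
      ∃ D s, Rep q hq0 χ D s := by
    intro χ hχ
    induction hχ using Algebra.adjoin_induction with
    | mem x hx =>
      rcases hx with hx | hx
      · obtain ⟨r, rfl⟩ := hx
        exact ⟨_, _, rep_lmul q hq0 r⟩
      · simp only [Set.mem_insert_iff, Set.mem_singleton_iff] at hx
        rcases hx with rfl | rfl | rfl
        · exact ⟨_, _, rep_dqm1 q hq0 hq1⟩
        · exact ⟨_, _, rep_dq0 q hq0⟩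
        · exact ⟨_, _, rep_dq1 q hq0 hq1⟩
    | algebraMap r => exact ⟨_, _, rep_algebraMap q hq0 r⟩
    | add x y _ _ hx hy =>
      obtain ⟨D1, s1, hr1⟩ := hx
      obtain ⟨D2, s2, hr2⟩ := hy
      exact ⟨_, _, rep_add q hq0 hr1 hr2⟩
    | mul x y _ _ hx hy =>
      obtain ⟨D1, s1, hr1⟩ := hx
      obtain ⟨D2, s2, hr2⟩ := hy
      exact ⟨_, _, rep_mul q hq0 hr1 hr2⟩
  obtain ⟨D1, s1, h1⟩ := hGood φ hφ
  obtain ⟨D2, s2, h2⟩ := hGood ψ hψ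
  by_contra hcon
  push_neg at hcon
  obtain ⟨hφ0, hψ0⟩ := hcon
  -- the supports of the symbols are nonempty
  have hT1 : (D1.filter fun d => s1 d ≠ 0).Nonempty := by
    rw [Finset.filter_nonempty_iff]
    by_contra hno
    push_neg at hno
    exact hφ0 (eq_zero_of_rep q hq0 h1 hno)
  have hT2 : (D2.filter fun d => s2 d ≠ 0).Nonempty := by
    rw [Finset.filter_nonempty_iff]
    by_contra hno
    push_neg at hno
    exact hψ0 (eq_zero_of_rep q hq0 h2 hno)
  set d1 := (D1.filter fun d => s1 d ≠ 0).max' hT1 with hd1def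
  set d2 := (D2.filter fun d => s2 d ≠ 0).max' hT2 with hd2def
  have hd1mem := (D1.filter fun d => s1 d ≠ 0).max'_mem hT1
  have hd2mem := (D2.filter fun d => s2 d ≠ 0).max'_mem hT2
  rw [Finset.mem_filter] at hd1mem hd2mem
  have hrepmul := rep_mul q hq0 h1 h2
  rw [h] at hrepmul
  have hdmem : d1 + d2 ∈ (D1 ×ˢ D2).image fun p : ℤ × ℤ => p.1 + p.2 :=
    Finset.mem_image.mpr ⟨(d1, d2), Finset.mem_product.mpr ⟨hd1mem.1, hd2mem.1⟩, rfl⟩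
  have hz := rep_zero q hq0 hinj hrepmul (d1 + d2) hdmem
  have hcollapse : ∑ p ∈ (D1 ×ˢ D2).filter (fun p : ℤ × ℤ => p.1 + p.2 = d1 + d2),
      tau q hq0 p.2 (s1 p.1) * s2 p.2 = tau q hq0 d2 (s1 d1) * s2 d2 := by
    refine Finset.sum_eq_single_of_mem (d1, d2)
      (Finset.mem_filter.mpr ⟨Finset.mem_product.mpr ⟨hd1mem.1, hd2mem.1⟩, rfl⟩)
      (fun p hp hne => ?_)
    rw [Finset.mem_filter, Finset.mem_product] at hp
    by_cases hz1 : s1 p.1 = 0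
    · rw [hz1, map_zero, zero_mul]
    by_cases hz2 : s2 p.2 = 0
    · rw [hz2, mul_zero]
    exfalso
    have hle1 : p.1 ≤ d1 := Finset.le_max' _ _ (Finset.mem_filter.mpr ⟨hp.1.1, hz1⟩)
    have hle2 : p.2 ≤ d2 := Finset.le_max' _ _ (Finset.mem_filter.mpr ⟨hp.1.2, hz2⟩)
    have hsum : p.1 + p.2 = d1 + d2 := hp.2
    have hpe : p.1 = d1 ∧ p.2 = d2 := by omega
    exact hne (Prod.ext hpe.1 hpe.2)
  rw [hcollapse] at hz
  rcases mul_eq_zero.mp hz with h' | h'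
  · exact hd1mem.2 (tau_inj q hq0 hinj _ h')
  · exact hd2mem.2 h'

end Rep

end DomainProof

/-- Corollary C:Dqdomain: D_q is a domain. -/
theorem stmt11 [CharZero k] (q : k) (hq : Transcendental ℚ q)
    (φ ψ : Module.End k k[X])
    (hφ : φ ∈ Algebra.adjoin k (Set.range (lmul k) ∪ {dq q (-1), dq q 0, dq q 1}))
    (hψ : ψ ∈ Algebra.adjoin k (Set.range (lmul k) ∪ {dq q (-1), dq q 0, dq q 1}))
    (h : φ * ψ = 0) : φ = 0 ∨ ψ = 0 :=
  domain_main q hq φ ψ hφ hψ h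

end QDiff1
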